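/- arXiv:2310.11172 — 2 statements merged into one kernel-verified Lean document; each statement's English description precedes it below -/
import Mathlib

section
/- Let (A, B, C) be a recollement of abelian categories in which A, B, C have enough projectives and enough injectives, let X' be a class of objects of A closed under isomorphisms and X a class of objects of B closed under isomorphisms. Then X^⊥-cores i_*(A) ≤ X'^⊥-cores A + X^⊥-cores i_*(X'^⊥), where i_*(A) denotes the class of objects of B isomorphic to i_*(A) for A in A, i_*(X'^⊥) the class of objects of B isomorphic to i_*(A') for A' in X'^⊥, and X'^⊥-cores A the supremum over all objects of A. -/
open CategoryTheory CategoryTheory.Limits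

universe w₁ w₂ w₃ v₁ v₂ v₃ u₁ u₂ u₃

namespace Paper

/-- A recollement of abelian categories `(𝒜, ℬ, 𝒞)`. -/
structure Recollement (𝒜 : Type u₁) (ℬ : Type u₂) (𝒞 : Type u₃)
    [Category.{v₁} 𝒜] [Category.{v₂} ℬ] [Category.{v₃} 𝒞]
    [Preadditive 𝒜] [Preadditive ℬ] [Preadditive 𝒞] where
  /-- `i^* : ℬ → 𝒜` -/
  iStar : ℬ ⥤ 𝒜
  /-- `i_* : 𝒜 → ℬ` -/
  iIns : 𝒜 ⥤ ℬ
  /-- `i^! : ℬ → 𝒜` -/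
  iShriek : ℬ ⥤ 𝒜
  /-- `j_! : 𝒞 → ℬ` -/
  jShriek : 𝒞 ⥤ ℬ
  /-- `j^* : ℬ → 𝒞` -/
  jStar : ℬ ⥤ 𝒞
  /-- `j_* : 𝒞 → ℬ` -/
  jIns : 𝒞 ⥤ ℬ
  iStar_additive : iStar.Additive
  iIns_additive : iIns.Additive
  iShriek_additive : iShriek.Additive
  jShriek_additive : jShriek.Additive
  jStar_additive : jStar.Additive
  jIns_additive : jIns.Additive
  /-- `i^* ⊣ i_*` -/
  adj₁ : iStar ⊣ iIns
  /-- `i_* ⊣ i^!` -/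
  adj₂ : iIns ⊣ iShriek
  /-- `j_! ⊣ j^*` -/
  adj₃ : jShriek ⊣ jStar
  /-- `j^* ⊣ j_*` -/
  adj₄ : jStar ⊣ jIns
  iIns_full : iIns.Full
  iIns_faithful : iIns.Faithful
  jShriek_full : jShriek.Full
  jShriek_faithful : jShriek.Faithful
  jIns_full : jIns.Full
  jIns_faithful : jIns.Faithful
  /-- an object `B` of `ℬ` satisfies `j^*(B) = 0` iff `B ≅ i_*(A)` for some `A` -/
  ker_jStar : ∀ B : ℬ, IsZero (jStar.obj B) ↔ ∃ A : 𝒜, Nonempty (iIns.obj A ≅ B)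

variable {D : Type u₁} [Category.{v₁} D] [Abelian D]

/-- The right perpendicular class `X^⊥` of a class of objects:
objects `M` with `Ext^i(A, M) = 0` for all `A` in the class and all `i ≥ 1`. -/
def perp [HasExt.{w₁} D] (X : D → Prop) : D → Prop :=
  fun M => ∀ A, X A → ∀ i : ℕ, 1 ≤ i → Subsingleton (Abelian.Ext A M i)

/-- `CoresSeq W n M Z` : there is an exact sequence
`0 → M → W₀ → ⋯ → W_{n-1} → Z → 0` with each `Wᵢ` in `W`. -/
def CoresSeq (W : D → Prop) : ℕ → D → D → Prop
  | 0, M, Z => Nonempty (M ≅ Z)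
  | n + 1, M, Z => ∃ (W₀ K : D) (f : M ⟶ W₀) (g : W₀ ⟶ K) (h : f ≫ g = 0),
      W W₀ ∧ (ShortComplex.mk f g h).ShortExact ∧ CoresSeq W n K Z

/-- The `W`-coresolution dimension of an object, valued in `ℕ∞`:
the least `n` such that there is an exact sequence `0 → M → W₀ → ⋯ → Wₙ → 0`
with all `Wᵢ` in `W` (and `∞` if there is no such sequence). -/
noncomputable def coresDim (W : D → Prop) (M : D) : ℕ∞ :=
  sInf {n : ℕ∞ | ∃ m : ℕ, n = (m : ℕ∞) ∧ ∃ Z, W Z ∧ CoresSeq W m M Z}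

/-- The `W`-coresolution dimension of a class of objects: the supremum of the
coresolution dimensions of its members. -/
noncomputable def coresDimClass (W S : D → Prop) : ℕ∞ :=
  ⨆ (M : D) (_ : S M), coresDim W M

/-- The essential image of a class of objects under a functor. -/
def imageClass {E : Type u₂} [Category.{v₂} E] (F : D ⥤ E) (S : D → Prop) : E → Prop :=
  fun Y => ∃ M, S M ∧ Nonempty (F.obj M ≅ Y)

variable {𝒜 : Type u₁} {ℬ : Type u₂} {𝒞 : Type u₃}
  [Category.{v₁} 𝒜] [Category.{v₂} ℬ] [Category.{v₃} 𝒞]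
  [Abelian 𝒜] [Abelian ℬ] [Abelian 𝒞]
  [EnoughProjectives 𝒜] [EnoughInjectives 𝒜]
  [EnoughProjectives ℬ] [EnoughInjectives ℬ]
  [EnoughProjectives 𝒞] [EnoughInjectives 𝒞]
variable [HasExt.{w₁} 𝒜] [HasExt.{w₂} ℬ] [HasExt.{w₃} 𝒞]


section AuxLemmas

universe w v u

open DerivedCategory

variable {E : Type u} [Category.{v} E] [Abelian E]

lemma quotient_map_eq_zero_of_concentrated {Z' T : CochainComplex E ℤ} (p : ℤ)
    (hTzero : ∀ i : ℤ, i ≠ p → IsZero (T.X i))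
    (hTI : Injective (T.X p))
    (hZ : Z'.ExactAt p)
    (g : Z' ⟶ T) :
    (HomotopyCategory.quotient E (ComplexShape.up ℤ)).map g = 0 := by
  rw [HomologicalComplex.exactAt_iff' Z' (p - 1) p (p + 1) (by simp) (by simp)] at hZ
  set S := Z'.sc' (p - 1) p (p + 1) with hS
  have hf : S.f = Z'.d (p - 1) p := rfl
  have hg : S.g = Z'.d p (p + 1) := rfl
  have hd : S.f ≫ g.f p = 0 := by
    have h1 := g.comm (p - 1) p
    have h2 : g.f (p - 1) = 0 := (hTzero _ (by omega)).eq_of_tgt _ _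
    show Z'.d (p - 1) p ≫ g.f p = 0
    rw [← h1, h2, zero_comp]
  haveI : Mono S.fromOpcycles := hZ.mono_fromOpcycles
  set ψ : Z'.X (p + 1) ⟶ T.X p :=
    @Injective.factorThru _ _ _ _ _ _ (S.descOpcycles (g.f p) hd) S.fromOpcycles
      hZ.mono_fromOpcycles with hψ
  have hfac : Z'.d p (p + 1) ≫ ψ = g.f p := by
    rw [← hg, ← S.p_fromOpcycles]
    erw [Category.assoc, hψ, Injective.comp_factorThru,
      S.p_descOpcycles]
  have H : Homotopy g 0 := {
    hom := fun i j =>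
      if h : i = p + 1 ∧ j = p then
        (Z'.XIsoOfEq h.1).hom ≫ ψ ≫ (T.XIsoOfEq h.2.symm).hom
      else 0
    zero := fun i j hij => by
      rw [dif_neg]
      rintro ⟨rfl, rfl⟩
      exact hij (by simp)
    comm := fun i => by
      by_cases hi : i = p
      · subst hi
        rw [dNext_eq _ (show (ComplexShape.up ℤ).Rel i (i + 1) by simp),
          prevD_eq _ (show (ComplexShape.up ℤ).Rel (i - 1) i by simp)]
        rw [dif_pos ⟨rfl, rfl⟩, dif_neg (by omega)]
        simp [hfac]
      · exact (hTzero i hi).eq_of_tgt _ _ }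
  rw [HomotopyCategory.eq_of_homotopy g 0 H, Functor.map_zero]

lemma singleFunctor_hom_eq_zero [HasDerivedCategory.{w} E] (A I : E) [Injective I]
    (n : ℤ) (hn : 1 ≤ n)
    (φ : (DerivedCategory.singleFunctor E 0).obj A ⟶
      ((DerivedCategory.singleFunctor E 0).obj I)⟦n⟧) :
    φ = 0 := by
  haveI : (HomotopyCategory.quasiIso E (ComplexShape.up ℤ)).HasRightCalculusOfFractions := by
    rw [HomotopyCategory.quasiIso_eq_subcategoryAcyclic_W]; infer_instance
  let SA : HomotopyCategory E (ComplexShape.up ℤ) := (HomotopyCategory.singleFunctor E 0).obj A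
  let SI : HomotopyCategory E (ComplexShape.up ℤ) := (HomotopyCategory.singleFunctor E 0).obj I
  let e : DerivedCategory.Qh.obj (SI⟦n⟧) ≅ (DerivedCategory.Qh.obj SI)⟦n⟧ :=
    (DerivedCategory.Qh.commShiftIso n).app SI
  refine (cancel_mono e.inv).mp (Eq.trans ?_ zero_comp.symm)
  obtain ⟨ζ, hζ⟩ := Localization.exists_rightFraction DerivedCategory.Qh
    (HomotopyCategory.quasiIso E (ComplexShape.up ℤ)) (φ ≫ e.inv)
  have hfz : ζ.f = 0 := by
    have hZex : (ζ.X').as.ExactAt (-n) := by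
      have h2 : IsZero (((CochainComplex.singleFunctor E 0).obj A).homology (-n)) := by
        exact HomologicalComplex.isZero_single_obj_homology (ComplexShape.up ℤ) 0 A (-n)
          (by omega)
      have h1 : IsZero ((HomotopyCategory.homologyFunctor E (ComplexShape.up ℤ) (-n)).obj SA) :=
        IsZero.of_iso h2 ((HomotopyCategory.homologyFunctorFactors E (ComplexShape.up ℤ) (-n)).app
          ((CochainComplex.singleFunctor E 0).obj A))
      haveI : IsIso ((HomotopyCategory.homologyFunctor E (ComplexShape.up ℤ) (-n)).map ζ.s) :=
        ζ.hs (-n)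
      have h0 : IsZero ((HomotopyCategory.homologyFunctor E (ComplexShape.up ℤ) (-n)).obj ζ.X') :=
        h1.of_iso (asIso ((HomotopyCategory.homologyFunctor E (ComplexShape.up ℤ) (-n)).map ζ.s))
      rw [HomologicalComplex.exactAt_iff_isZero_homology]
      exact h0.of_iso (((HomotopyCategory.homologyFunctorFactors E (ComplexShape.up ℤ) (-n)).app
        ζ.X'.as).symm)
    let c : (HomotopyCategory.quotient E (ComplexShape.up ℤ)).obj
        ((((CochainComplex.singleFunctor E 0).obj I)⟦n⟧ : CochainComplex E ℤ)) ≅ SI⟦n⟧ :=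
      ((HomotopyCategory.quotient E (ComplexShape.up ℤ)).commShiftIso n).app
        ((CochainComplex.singleFunctor E 0).obj I)
    rw [← cancel_mono c.inv, zero_comp]
    have hg := quotient_map_eq_zero_of_concentrated (E := E) (Z' := ζ.X'.as)
      (T := (((CochainComplex.singleFunctor E 0).obj I)⟦n⟧ : CochainComplex E ℤ)) (-n)
      (fun i hi => HomologicalComplex.isZero_single_obj_X (ComplexShape.up ℤ) 0 I (i + n)
        (by omega))
      (by
        have e2 : ((((CochainComplex.singleFunctor E 0).obj I)⟦n⟧ : CochainComplex E ℤ).X (-n)) ≅ I :=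
          ((((HomologicalComplex.single E (ComplexShape.up ℤ) 0).obj I)).XIsoOfEq
            (show (-n) + n = 0 by omega)) ≪≫
              (HomologicalComplex.singleObjXSelf (ComplexShape.up ℤ) 0 I)
        exact Injective.of_iso e2.symm ‹_›)
      hZex (ζ.f ≫ c.inv).out
    replace hg := (HomotopyCategory.quotient_map_out (ζ.f ≫ c.inv)).symm.trans hg
    exact hg
  refine hζ.trans ?_
  have hmap := ζ.map_s_comp_map DerivedCategory.Qh (Localization.inverts DerivedCategory.Qh
    (HomotopyCategory.quasiIso E (ComplexShape.up ℤ)))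
  rw [hfz, Functor.map_zero] at hmap
  haveI : IsIso (DerivedCategory.Qh.map ζ.s) :=
    Localization.inverts DerivedCategory.Qh _ ζ.s ζ.hs
  exact (cancel_epi (DerivedCategory.Qh.map ζ.s)).mp (hmap.trans comp_zero.symm)

variable [HasExt.{w} E]

lemma ext_subsingleton_of_injective (A I : E) (hI : Injective I) (n : ℕ) (hn : 1 ≤ n) :
    Subsingleton (Abelian.Ext A I n) := by
  letI := HasDerivedCategory.standard E
  have hz : ∀ x : Abelian.Ext A I n, x = 0 := by
    intro x
    apply Abelian.Ext.ext
    rw [Abelian.Ext.zero_hom]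
    exact singleFunctor_hom_eq_zero A I (n : ℤ) (by exact_mod_cast hn) x.hom
  exact ⟨fun x y => by rw [hz x, hz y]⟩

lemma ext_subsingleton_of_iso {M N A : E} (e : M ≅ N) (k : ℕ)
    (h : Subsingleton (Abelian.Ext A M k)) : Subsingleton (Abelian.Ext A N k) := by
  have hz : ∀ x : Abelian.Ext A N k, x = 0 := by
    intro x
    have h1 : x.comp (Abelian.Ext.mk₀ e.inv) (add_zero k) = 0 := Subsingleton.elim _ _
    have h2 : (x.comp (Abelian.Ext.mk₀ e.inv) (add_zero k)).comp
        (Abelian.Ext.mk₀ e.hom) (add_zero k) = x := by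
      rw [Abelian.Ext.comp_assoc_of_third_deg_zero, Abelian.Ext.mk₀_comp_mk₀, Iso.inv_hom_id,
        Abelian.Ext.comp_mk₀_id]
    rw [← h2, h1, Abelian.Ext.zero_comp]
  exact ⟨fun x y => by rw [hz x, hz y]⟩

lemma subsingleton_of_shortExact₁ {S : ShortComplex E} (hS : S.ShortExact) (A : E) (n₀ : ℕ)
    (h₃ : Subsingleton (Abelian.Ext A S.X₃ n₀)) (h₂ : Subsingleton (Abelian.Ext A S.X₂ (n₀ + 1))) :
    Subsingleton (Abelian.Ext A S.X₁ (n₀ + 1)) := by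
  have hz : ∀ x : Abelian.Ext A S.X₁ (n₀ + 1), x = 0 := by
    intro x
    obtain ⟨x₃, hx₃⟩ := Abelian.Ext.covariant_sequence_exact₁ A hS x (Subsingleton.elim _ _) rfl
    rw [← hx₃, Subsingleton.elim x₃ 0, Abelian.Ext.zero_comp]
  exact ⟨fun x y => by rw [hz x, hz y]⟩

lemma subsingleton_of_shortExact₃ {S : ShortComplex E} (hS : S.ShortExact) (A : E) (n : ℕ)
    (h₂ : Subsingleton (Abelian.Ext A S.X₂ n)) (h₁ : Subsingleton (Abelian.Ext A S.X₁ (n + 1))) :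
    Subsingleton (Abelian.Ext A S.X₃ n) := by
  have hz : ∀ x : Abelian.Ext A S.X₃ n, x = 0 := by
    intro x
    obtain ⟨x₂, hx₂⟩ := Abelian.Ext.covariant_sequence_exact₃ A hS x rfl (Subsingleton.elim _ _)
    rw [← hx₂, Subsingleton.elim x₂ 0, Abelian.Ext.zero_comp]
  exact ⟨fun x y => by rw [hz x, hz y]⟩

lemma subsingleton_of_coresSeq {X : E → Prop} :
    ∀ (m : ℕ) (M Z : E), CoresSeq (perp X) m M Z → perp X Z →
      ∀ A, X A → ∀ j : ℕ, m + 1 ≤ j → Subsingleton (Abelian.Ext A M j) := by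
  intro m
  induction m with
  | zero =>
    intro M Z hseq hZ A hA j hj
    obtain ⟨e⟩ := hseq
    exact ext_subsingleton_of_iso e.symm j (hZ A hA j (by omega))
  | succ m ih =>
    intro M Z hseq hZ A hA j hj
    obtain ⟨W₀, K, f, g, hfg, hW₀, hSE, hrest⟩ := hseq
    obtain ⟨j₀, rfl⟩ : ∃ j₀, j = j₀ + 1 := ⟨j - 1, by omega⟩
    exact subsingleton_of_shortExact₁ hSE A j₀
      (ih K Z hrest hZ A hA j₀ (by omega))
      (hW₀ A hA (j₀ + 1) (by omega))

lemma coresSeq_of_subsingleton [EnoughInjectives E] {X : E → Prop} :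
    ∀ (n : ℕ) (M : E),
      (∀ A, X A → ∀ j : ℕ, n + 1 ≤ j → Subsingleton (Abelian.Ext A M j)) →
      ∃ Z, perp X Z ∧ CoresSeq (perp X) n M Z := by
  intro n
  induction n with
  | zero =>
    intro M h
    exact ⟨M, fun A hA i hi => h A hA i (by omega), ⟨Iso.refl M⟩⟩
  | succ n ih =>
    intro M h
    set f : M ⟶ Injective.under M := Injective.ι M with hfdef
    set S : ShortComplex E := ShortComplex.mk f (cokernel.π f) (cokernel.condition f) with hSdef
    have hSE : S.ShortExact :=
      { exact := S.exact_of_g_is_cokernel (cokernelIsCokernel f)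
        mono_f := by dsimp [S]; infer_instance
        epi_g := by dsimp [S]; infer_instance }
    have hK : ∀ A, X A → ∀ j : ℕ, n + 1 ≤ j → Subsingleton (Abelian.Ext A (cokernel f) j) := by
      intro A hA j hj
      exact subsingleton_of_shortExact₃ hSE A j
        (ext_subsingleton_of_injective A (Injective.under M) (Injective.injective_under M) j
          (by omega))
        (h A hA (j + 1) (by omega))
    obtain ⟨Z, hZ, hseq⟩ := ih (cokernel f) hK
    exact ⟨Z, hZ, Injective.under M, cokernel f, f, cokernel.π f, cokernel.condition f,
      (fun A hA i hi => ext_subsingleton_of_injective A (Injective.under M)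
        (Injective.injective_under M) i hi), hSE, hseq⟩

lemma coresDim_le_of {W : E → Prop} {M : E} {m : ℕ}
    (h : ∃ Z, W Z ∧ CoresSeq W m M Z) : coresDim W M ≤ (m : ℕ∞) :=
  sInf_le ⟨m, rfl, h⟩

lemma exists_of_coresDim_le {W : E → Prop} {M : E} {n : ℕ}
    (h : coresDim W M ≤ (n : ℕ∞)) :
    ∃ m : ℕ, m ≤ n ∧ ∃ Z, W Z ∧ CoresSeq W m M Z := by
  have h2 : coresDim W M < ((n + 1 : ℕ) : ℕ∞) :=
    lt_of_le_of_lt h (by exact_mod_cast Nat.lt_succ_self n)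
  rw [coresDim, sInf_lt_iff] at h2
  obtain ⟨a, ⟨m, rfl, hZ⟩, hlt⟩ := h2
  refine ⟨m, ?_, hZ⟩
  have : m < n + 1 := by exact_mod_cast hlt
  omega

end AuxLemmas

/-- Theorem 3.6(2) : a bound for the `X^⊥`-coresolution dimension of `i_*(𝒜)`. -/
theorem stmt_5 (R : Recollement 𝒜 ℬ 𝒞)
    (X' : 𝒜 → Prop) (hX' : ∀ A B : 𝒜, (A ≅ B) → X' A → X' B)
    (X : ℬ → Prop) (hX : ∀ A B : ℬ, (A ≅ B) → X A → X B) :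
    coresDimClass (perp X) (imageClass R.iIns (fun _ => True)) ≤
      coresDimClass (perp X') (fun _ : 𝒜 => True) +
        coresDimClass (perp X) (imageClass R.iIns (perp X')) := by
  haveI := R.iIns_additive
  haveI : PreservesLimitsOfSize.{0, 0} R.iIns := R.adj₁.rightAdjoint_preservesLimits
  haveI : PreservesColimitsOfSize.{0, 0} R.iIns := R.adj₂.leftAdjoint_preservesColimits
  haveI : PreservesFiniteLimits R.iIns := ⟨fun J _ _ => inferInstance⟩
  haveI : PreservesFiniteColimits R.iIns := ⟨fun J _ _ => inferInstance⟩
  set a := coresDimClass (perp X') (fun _ : 𝒜 => True) with ha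
  set b := coresDimClass (perp X) (imageClass R.iIns (perp X')) with hb
  rcases eq_or_ne a ⊤ with h | ha'
  · rw [h, top_add]; exact le_top
  rcases eq_or_ne b ⊤ with h | hb'
  · rw [h, add_top]; exact le_top
  obtain ⟨na, hna0⟩ := WithTop.ne_top_iff_exists.mp ha'
  obtain ⟨nb, hnb0⟩ := WithTop.ne_top_iff_exists.mp hb'
  have hna : (na : ℕ∞) = a := by exact_mod_cast hna0
  have hnb : (nb : ℕ∞) = b := by exact_mod_cast hnb0
  have hbound : ∀ N : ℬ, imageClass R.iIns (perp X') N →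
      ∀ B, X B → ∀ j : ℕ, nb + 1 ≤ j → Subsingleton (Abelian.Ext B N j) := by
    intro N hN B hB j hj
    have h1 : coresDim (perp X) N ≤ (nb : ℕ∞) := by
      rw [hnb]
      exact le_iSup₂ (f := fun (M : ℬ) (_ : imageClass R.iIns (perp X') M) =>
        coresDim (perp X) M) N hN
    obtain ⟨m, hm, Z, hZ, hseq⟩ := exists_of_coresDim_le h1
    exact subsingleton_of_coresSeq m N Z hseq hZ B hB j (by omega)
  have star : ∀ (m : ℕ) (A Z' : 𝒜), CoresSeq (perp X') m A Z' → perp X' Z' →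
      ∀ B, X B → ∀ j : ℕ, m + nb + 1 ≤ j →
        Subsingleton (Abelian.Ext B (R.iIns.obj A) j) := by
    intro m
    induction m with
    | zero =>
      intro A Z' hseq hZ' B hB j hj
      obtain ⟨e⟩ := hseq
      exact hbound _ ⟨Z', hZ', ⟨R.iIns.mapIso e.symm⟩⟩ B hB j (by omega)
    | succ m ih =>
      intro A Z' hseq hZ' B hB j hj
      obtain ⟨W₀, K, f, g, hfg, hW₀, hSE, hrest⟩ := hseq
      obtain ⟨j₀, rfl⟩ : ∃ j₀, j = j₀ + 1 := ⟨j - 1, by omega⟩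
      have hSE' : (ShortComplex.mk (R.iIns.map f) (R.iIns.map g)
          (by rw [← R.iIns.map_comp, hfg, R.iIns.map_zero])).ShortExact :=
        hSE.map_of_exact R.iIns
      exact subsingleton_of_shortExact₁ hSE' B j₀
        (ih K Z' hrest hZ' B hB j₀ (by omega))
        (hbound (R.iIns.obj W₀) ⟨W₀, hW₀, ⟨Iso.refl _⟩⟩ B hB (j₀ + 1) (by omega))
  refine iSup_le fun M => iSup_le fun hM => ?_
  obtain ⟨A, -, ⟨eiso⟩⟩ := hM
  have h1 : coresDim (perp X') A ≤ (na : ℕ∞) := by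
    rw [hna]
    exact le_iSup₂ (f := fun (M : 𝒜) (_ : True) => coresDim (perp X') M) A trivial
  obtain ⟨m, hm, Z', hZ', hseq⟩ := exists_of_coresDim_le h1
  have hvanish : ∀ B, X B → ∀ j : ℕ, (na + nb) + 1 ≤ j →
      Subsingleton (Abelian.Ext B M j) := by
    intro B hB j hj
    exact ext_subsingleton_of_iso eiso j (star m A Z' hseq hZ' B hB j (by omega))
  obtain ⟨Z, hZ, hcs⟩ := coresSeq_of_subsingleton (na + nb) M hvanish
  calc coresDim (perp X) M ≤ ((na + nb : ℕ) : ℕ∞) := coresDim_le_of ⟨Z, hZ, hcs⟩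
    _ = (na : ℕ∞) + (nb : ℕ∞) := by push_cast; rfl
    _ = a + b := by rw [hna, hnb]


end Paper
end

section
/- Let (A, B, C) be a recollement of abelian categories in which A, B, C have enough projectives and enough injectives, let X be a class of objects of B closed under isomorphisms and X'' a class of objects of C closed under isomorphisms. Then X''^⊥-cores C ≤ X^⊥-cores B + X''^⊥-cores j^*(X^⊥), where X''^⊥-cores C and X^⊥-cores B denote the suprema over all objects of C and of B respectively, and j^*(X^⊥) denotes the class of objects of C isomorphic to j^*(B') for some B' in X^⊥. -/
open CategoryTheory CategoryTheory.Limits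

universe w₁ w₂ w₃ v₁ v₂ v₃ u₁ u₂ u₃

namespace Paper

variable {D : Type u₁} [Category.{v₁} D] [Abelian D]

/-! ### Auxiliary lemmas -/

section Aux

variable [HasExt.{w₁} D]

/-- `Ext^k(A, M) = 0` for all `A ∈ S` and all `k ≥ d + 1`. -/
def ExtVan (S : D → Prop) (d : ℕ) (M : D) : Prop :=
  ∀ A, S A → ∀ k : ℕ, d + 1 ≤ k → Subsingleton (Abelian.Ext A M k)

lemma extVan_mono {S : D → Prop} {d d' : ℕ} {M : D} (h : d ≤ d') (H : ExtVan S d M) :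
    ExtVan S d' M :=
  fun A hA k hk => H A hA k (by omega)

lemma subsingleton_ext_of_iso {A M M' : D} (e : M ≅ M') (k : ℕ)
    (h : Subsingleton (Abelian.Ext A M k)) : Subsingleton (Abelian.Ext A M' k) := by
  have hinj : ∀ z : Abelian.Ext A M' k,
      (z.comp (Abelian.Ext.mk₀ e.inv) (add_zero k)).comp (Abelian.Ext.mk₀ e.hom) (add_zero k)
        = z := by
    intro z
    rw [Abelian.Ext.comp_assoc_of_third_deg_zero, Abelian.Ext.mk₀_comp_mk₀, e.inv_hom_id,
      Abelian.Ext.comp_mk₀_id]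
  refine ⟨fun x y => ?_⟩
  have : x.comp (Abelian.Ext.mk₀ e.inv) (add_zero k) = y.comp (Abelian.Ext.mk₀ e.inv)
      (add_zero k) := @Subsingleton.elim _ h _ _
  rw [← hinj x, ← hinj y, this]

lemma van_step_up {S : ShortComplex D} (hS : S.ShortExact) (A : D) (k : ℕ)
    (h₃ : Subsingleton (Abelian.Ext A S.X₃ k))
    (h₂ : Subsingleton (Abelian.Ext A S.X₂ (k + 1))) :
    Subsingleton (Abelian.Ext A S.X₁ (k + 1)) := by
  have hz : ∀ z : Abelian.Ext A S.X₁ (k + 1), z = 0 := by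
    intro z
    obtain ⟨x₃, hx₃⟩ :=
      Abelian.Ext.covariant_sequence_exact₁ A hS z (@Subsingleton.elim _ h₂ _ _) rfl
    rw [← hx₃, @Subsingleton.elim _ h₃ x₃ 0]
    apply Abelian.Ext.zero_comp
  exact ⟨fun a b => by rw [hz a, hz b]⟩

lemma van_step_down {S : ShortComplex D} (hS : S.ShortExact) (A : D) (k : ℕ)
    (h₂ : Subsingleton (Abelian.Ext A S.X₂ k))
    (h₁ : Subsingleton (Abelian.Ext A S.X₁ (k + 1))) :
    Subsingleton (Abelian.Ext A S.X₃ k) := by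
  have hz : ∀ z : Abelian.Ext A S.X₃ k, z = 0 := by
    intro z
    obtain ⟨x₂, hx₂⟩ :=
      Abelian.Ext.covariant_sequence_exact₃ A hS z rfl (@Subsingleton.elim _ h₁ _ _)
    rw [← hx₂, @Subsingleton.elim _ h₂ x₂ 0]
    apply Abelian.Ext.zero_comp
  exact ⟨fun a b => by rw [hz a, hz b]⟩

/-- Ext-vanishing obtained from a `W`-coresolution whose terms have Ext-vanishing. -/
lemma extVan_of_coresSeq {W S : D → Prop} {d : ℕ} (n : ℕ) :
    ∀ (M Z : D), CoresSeq W n M Z → (∀ T, W T → ExtVan S d T) → ExtVan S d Z →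
      ExtVan S (n + d) M := by
  induction n with
  | zero =>
    intro M Z h _ hZ
    obtain ⟨e⟩ := h
    intro A hA k hk
    exact subsingleton_ext_of_iso e.symm k (hZ A hA k (by omega))
  | succ n ih =>
    intro M Z h hW hZ
    obtain ⟨W₀, K, f, g, hfg, hW₀, hSE, hrest⟩ := h
    have ihK := ih K Z hrest hW hZ
    intro A hA k hk
    obtain ⟨k₀, rfl⟩ : ∃ k₀, k = k₀ + 1 := ⟨k - 1, by omega⟩
    exact van_step_up hSE A k₀ (ihK A hA k₀ (by omega)) (hW W₀ hW₀ A hA (k₀ + 1) (by omega))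

/-- Building a `perp S`-coresolution from Ext-vanishing, provided every object embeds
into an object of `perp S`. -/
lemma coresSeq_of_extVan {S : D → Prop}
    (hemb : ∀ M : D, ∃ (V : D) (ι : M ⟶ V), Mono ι ∧ perp S V) (d : ℕ) :
    ∀ M : D, ExtVan S d M → ∃ Z, perp S Z ∧ CoresSeq (perp S) d M Z := by
  induction d with
  | zero =>
    intro M hM
    exact ⟨M, fun A hA i hi => hM A hA i hi, ⟨Iso.refl M⟩⟩
  | succ d ih =>
    intro M hM
    obtain ⟨V, ι, hmono, hV⟩ := hemb M
    haveI := hmono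
    have hcond : ι ≫ cokernel.π ι = 0 := cokernel.condition ι
    have hSE : (ShortComplex.mk ι (cokernel.π ι) hcond).ShortExact :=
      { exact := (ShortComplex.mk ι (cokernel.π ι) hcond).exact_of_g_is_cokernel
          (cokernelIsCokernel ι) }
    have hQ : ExtVan S d (cokernel ι) := by
      intro A hA k hk
      exact van_step_down hSE A k (hV A hA k (by omega)) (hM A hA (k + 1) (by omega))
    obtain ⟨Z, hZ, hseq⟩ := ih (cokernel ι) hQ
    exact ⟨Z, hZ, V, cokernel ι, ι, cokernel.π ι, hcond, hV, hSE, hseq⟩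

lemma coresDim_le_of_coresSeq {W : D → Prop} {M Z : D} {k : ℕ} (hZ : W Z)
    (h : CoresSeq W k M Z) : coresDim W M ≤ (k : ℕ∞) :=
  sInf_le ⟨k, rfl, Z, hZ, h⟩

lemma exists_coresSeq_of_coresDim_le {W : D → Prop} {M : D} {N : ℕ}
    (h : coresDim W M ≤ (N : ℕ∞)) :
    ∃ k : ℕ, k ≤ N ∧ ∃ Z, W Z ∧ CoresSeq W k M Z := by
  have hTne : {m : ℕ | ∃ Z, W Z ∧ CoresSeq W m M Z}.Nonempty := by
    by_contra hc
    have hset : {n : ℕ∞ | ∃ m : ℕ, n = (m : ℕ∞) ∧ ∃ Z, W Z ∧ CoresSeq W m M Z} = ∅ := by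
      ext x
      simp only [Set.mem_setOf_eq, Set.mem_empty_iff_false, iff_false]
      rintro ⟨m, rfl, hm⟩
      exact hc ⟨m, hm⟩
    simp only [coresDim] at h
    rw [hset, sInf_empty] at h
    exact (WithTop.coe_lt_top N).not_ge h
  set k := sInf {m : ℕ | ∃ Z, W Z ∧ CoresSeq W m M Z} with hkdef
  have hk := Nat.sInf_mem hTne
  have hlow : (k : ℕ∞) ≤ coresDim W M := by
    apply le_sInf
    rintro x ⟨m, rfl, Z, hZW, hs⟩
    have hmem : m ∈ {m : ℕ | ∃ Z, W Z ∧ CoresSeq W m M Z} := ⟨Z, hZW, hs⟩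
    exact_mod_cast Nat.sInf_le hmem
  have hkN : (k : ℕ∞) ≤ (N : ℕ∞) := hlow.trans h
  exact ⟨k, by exact_mod_cast hkN, hk⟩

lemma coresDim_le_coresDimClass {W S : D → Prop} {M : D} (hM : S M) :
    coresDim W M ≤ coresDimClass W S :=
  le_iSup₂ (f := fun (M : D) (_ : S M) => coresDim W M) M hM

end Aux

/-- Mapping a coresolution through an exact functor. -/
lemma coresSeq_map {E : Type u₂} [Category.{v₂} E] [Abelian E]
    (F : D ⥤ E) [F.Additive] [PreservesFiniteLimits F] [PreservesFiniteColimits F]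
    (W : D → Prop) (n : ℕ) :
    ∀ (M Z : D), CoresSeq W n M Z →
      CoresSeq (imageClass F W) n (F.obj M) (F.obj Z) := by
  induction n with
  | zero =>
    intro M Z h
    obtain ⟨e⟩ := h
    exact ⟨F.mapIso e⟩
  | succ n ih =>
    intro M Z h
    obtain ⟨W₀, K, f, g, hfg, hW₀, hSE, hrest⟩ := h
    refine ⟨F.obj W₀, F.obj K, F.map f, F.map g, ?_, ⟨W₀, hW₀, ⟨Iso.refl _⟩⟩, ?_,
      ih K Z hrest⟩
    · rw [← F.map_comp, hfg, F.map_zero]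
    · exact hSE.map_of_exact F

variable {𝒜 : Type u₁} {ℬ : Type u₂} {𝒞 : Type u₃}
  [Category.{v₁} 𝒜] [Category.{v₂} ℬ] [Category.{v₃} 𝒞]
  [Abelian 𝒜] [Abelian ℬ] [Abelian 𝒞]
  [EnoughProjectives 𝒜] [EnoughInjectives 𝒜]
  [EnoughProjectives ℬ] [EnoughInjectives ℬ]
  [EnoughProjectives 𝒞] [EnoughInjectives 𝒞]
variable [HasExt.{w₁} 𝒜] [HasExt.{w₂} ℬ] [HasExt.{w₃} 𝒞]

/-- Theorem 3.6(4) : a bound for the `X''^⊥`-coresolution dimension of `𝒞`. -/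
theorem stmt_6 (R : Recollement 𝒜 ℬ 𝒞)
    (X : ℬ → Prop) (hX : ∀ A B : ℬ, (A ≅ B) → X A → X B)
    (X'' : 𝒞 → Prop) (hX'' : ∀ A B : 𝒞, (A ≅ B) → X'' A → X'' B) :
    coresDimClass (perp X'') (fun _ : 𝒞 => True) ≤
      coresDimClass (perp X) (fun _ : ℬ => True) +
        coresDimClass (perp X'') (imageClass R.jStar (perp X)) := by
  classical
  by_cases htop : coresDimClass (perp X) (fun _ : ℬ => True) +
      coresDimClass (perp X'') (imageClass R.jStar (perp X)) = ⊤
  · rw [htop]; exact le_top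
  have h1 : coresDimClass (perp X) (fun _ : ℬ => True) ≠ ⊤ := by
    intro h; exact htop (by rw [h, top_add])
  have h2 : coresDimClass (perp X'') (imageClass R.jStar (perp X)) ≠ ⊤ := by
    intro h; exact htop (by rw [h, add_top])
  obtain ⟨n, hn⟩ := ENat.canLift.prf _ h1
  obtain ⟨m, hm⟩ := ENat.canLift.prf _ h2
  -- exactness of `j^*`
  haveI := R.jStar_additive
  haveI : PreservesLimitsOfSize.{0, 0} R.jStar := R.adj₃.rightAdjoint_preservesLimits
  haveI : PreservesColimitsOfSize.{0, 0} R.jStar := R.adj₄.leftAdjoint_preservesColimits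
  haveI : PreservesFiniteLimits R.jStar := PreservesLimitsOfSize.preservesFiniteLimits _
  haveI : PreservesFiniteColimits R.jStar := PreservesColimitsOfSize.preservesFiniteColimits _
  haveI := R.jIns_full
  haveI := R.jIns_faithful
  -- the counit isomorphism `j^* j_* C ≅ C`
  have counitIso : ∀ Cc : 𝒞, R.jStar.obj (R.jIns.obj Cc) ≅ Cc := fun Cc =>
    asIso (R.adj₄.counit.app Cc)
  -- every object of `ℬ` has a short `perp X`-coresolution
  have hBdim : ∀ B : ℬ, ∃ k ≤ n, ∃ Z, perp X Z ∧ CoresSeq (perp X) k B Z := by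
    intro B
    have hle : coresDim (perp X) B ≤ (n : ℕ∞) := by
      rw [hn]; exact coresDim_le_coresDimClass trivial
    obtain ⟨k, hk, Z, hZ, hs⟩ := exists_coresSeq_of_coresDim_le hle
    exact ⟨k, hk, Z, hZ, hs⟩
  -- every object in the image class has Ext-vanishing above `m`
  have himg : ∀ T : 𝒞, imageClass R.jStar (perp X) T → ExtVan X'' m T := by
    intro T hT
    have hle : coresDim (perp X'') T ≤ (m : ℕ∞) := by
      rw [hm]; exact coresDim_le_coresDimClass hT
    obtain ⟨k, hk, Z, hZ, hs⟩ := exists_coresSeq_of_coresDim_le hle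
    have hvan := extVan_of_coresSeq (S := X'') (d := 0) k T Z hs
      (fun U hU A hA i hi => hU A hA i hi) (fun A hA i hi => hZ A hA i hi)
    exact extVan_mono (by omega) hvan
  -- every object of `𝒞` embeds into an object of `perp X''`
  have hemb : ∀ M : 𝒞, ∃ (V : 𝒞) (ι : M ⟶ V), Mono ι ∧ perp X'' V := by
    intro M
    obtain ⟨k, hk, ZB, hZB, hs⟩ := hBdim (R.jIns.obj M)
    have step1 : ∃ (Wb : ℬ) (u : M ⟶ R.jStar.obj Wb), perp X Wb ∧ Mono u := by
      cases k with
      | zero =>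
        obtain ⟨e⟩ := hs
        exact ⟨ZB, (counitIso M).inv ≫ R.jStar.map e.hom, hZB, inferInstance⟩
      | succ k' =>
        obtain ⟨W₀, K, f, g, hfg, hW₀, hSE, _⟩ := hs
        have hSE' := hSE.map_of_exact R.jStar
        haveI : Mono (R.jStar.map f) := hSE'.mono_f
        exact ⟨W₀, (counitIso M).inv ≫ R.jStar.map f, hW₀, mono_comp _ _⟩
    obtain ⟨Wb, u, hWb, humono⟩ := step1
    haveI := humono
    have hle : coresDim (perp X'') (R.jStar.obj Wb) ≤ (m : ℕ∞) := by
      rw [hm]; exact coresDim_le_coresDimClass ⟨Wb, hWb, ⟨Iso.refl _⟩⟩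
    obtain ⟨k₂, hk₂, Z₂, hZ₂, hs₂⟩ := exists_coresSeq_of_coresDim_le hle
    cases k₂ with
    | zero =>
      obtain ⟨e⟩ := hs₂
      exact ⟨Z₂, u ≫ e.hom, mono_comp _ _, hZ₂⟩
    | succ k' =>
      obtain ⟨V₀, K, f, g, hfg, hV₀, hSE, _⟩ := hs₂
      haveI : Mono f := hSE.mono_f
      exact ⟨V₀, u ≫ f, mono_comp _ _, hV₀⟩
  -- the main bound
  have hbound : ∀ Cc : 𝒞, coresDim (perp X'') Cc ≤ ((n + m : ℕ) : ℕ∞) := by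
    intro Cc
    obtain ⟨k, hk, ZB, hZB, hs⟩ := hBdim (R.jIns.obj Cc)
    have hmap := coresSeq_map R.jStar (perp X) k (R.jIns.obj Cc) ZB hs
    have hvan : ExtVan X'' (k + m) (R.jStar.obj (R.jIns.obj Cc)) :=
      extVan_of_coresSeq (S := X'') (d := m) k _ _ hmap himg
        (himg _ ⟨ZB, hZB, ⟨Iso.refl _⟩⟩)
    have hvanC : ExtVan X'' (n + m) Cc := fun A hA i hi =>
      subsingleton_ext_of_iso (counitIso Cc) i (hvan A hA i (by omega))
    obtain ⟨Z, hZ, hseq⟩ := coresSeq_of_extVan hemb (n + m) Cc hvanC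
    exact coresDim_le_of_coresSeq hZ hseq
  rw [← hn, ← hm, ← Nat.cast_add]
  exact iSup₂_le fun Cc _ => hbound Cc

end Paper
end
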